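/- On a rooted tree with nonnegative edge weights r_{hk} ≥ 0, the matrix R̃ defined by R̃_{ij} := Σ_{(h,k) ∈ L_i ∩ L_j} r_{hk} (where L_i is the edge set of the path from the root to node i) is symmetric and positive semidefinite; it is positive definite if every edge weight is strictly positive. -/

import Mathlib

/-- The mutual path-resistance matrix of a rooted tree is symmetric and PSD,
and positive definite when all edge weights are strictly positive.
Non-root nodes are `1,…,B` with parent `p j < j`; the edge into node `j` is
identified with `j`, and `path i` is the edge set of the root-to-`i` path. -/
theorem stmt_10 (B : ℕ) (p : ℕ → ℕ)
    (hp : ∀ j ∈ Finset.Icc 1 B, p j < j)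
    (path : ℕ → Finset ℕ)
    (hpath0 : path 0 = ∅)
    (hpath : ∀ j ∈ Finset.Icc 1 B, path j = insert j (path (p j)))
    (r : ℕ → ℝ) (hr : ∀ e ∈ Finset.Icc 1 B, 0 ≤ r e)
    (M : Matrix (Fin B) (Fin B) ℝ)
    (hM : ∀ i j : Fin B,
      M i j = ∑ e ∈ path (i.val + 1) ∩ path (j.val + 1), r e) :
    M.IsSymm ∧ M.PosSemidef ∧
      ((∀ e ∈ Finset.Icc 1 B, 0 < r e) → M.PosDef) := by
  -- paths are contained in `Icc 1 j`
  have hsub : ∀ j, j ≤ B → path j ⊆ Finset.Icc 1 j := by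
    intro j
    induction j using Nat.strong_induction_on with
    | _ j ih =>
      intro hj e he
      rcases Nat.eq_zero_or_pos j with h0 | h1
      · subst h0; simp [hpath0] at he
      · rw [hpath j (Finset.mem_Icc.mpr ⟨h1, hj⟩)] at he
        rcases Finset.mem_insert.mp he with rfl | he'
        · exact Finset.mem_Icc.mpr ⟨h1, le_refl _⟩
        · have hpj := hp j (Finset.mem_Icc.mpr ⟨h1, hj⟩)
          have h2 := Finset.mem_Icc.mp (ih (p j) hpj (le_trans hpj.le hj) he')
          exact Finset.mem_Icc.mpr ⟨h2.1, le_trans h2.2 hpj.le⟩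
  have hmemIcc : ∀ i : Fin B, i.val + 1 ∈ Finset.Icc 1 B := by
    intro i; exact Finset.mem_Icc.mpr ⟨Nat.le_add_left 1 _, i.isLt⟩
  have hsubB : ∀ i : Fin B, path (i.val + 1) ⊆ Finset.Icc 1 B := by
    intro i
    exact (hsub (i.val + 1) i.isLt).trans (Finset.Icc_subset_Icc_right i.isLt)
  -- rewrite M entries as a sum over all edges
  have hM' : ∀ i j : Fin B, M i j = ∑ e ∈ Finset.Icc 1 B,
      (if e ∈ path (i.val + 1) then (1:ℝ) else 0) *
      (if e ∈ path (j.val + 1) then (1:ℝ) else 0) * r e := by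
    intro i j
    rw [hM]
    have h1 : ∀ e ∈ Finset.Icc 1 B,
        (if e ∈ path (i.val + 1) then (1:ℝ) else 0) *
        (if e ∈ path (j.val + 1) then (1:ℝ) else 0) * r e =
        if e ∈ path (i.val + 1) ∩ path (j.val + 1) then r e else 0 := by
      intro e _
      by_cases hA : e ∈ path (i.val + 1) <;> by_cases hB : e ∈ path (j.val + 1) <;>
        simp [hA, hB]
    rw [Finset.sum_congr rfl h1, Finset.sum_ite_mem,
      Finset.inter_eq_right.mpr (fun e he => hsubB i (Finset.mem_inter.mp he).1)]
  -- the quadratic form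
  have hQ : ∀ x : Fin B → ℝ,
      dotProduct x (M.mulVec x)
        = ∑ e ∈ Finset.Icc 1 B,
            r e * (∑ i : Fin B, if e ∈ path (i.val + 1) then x i else 0) ^ 2 := by
    intro x
    have hstep : dotProduct x (M.mulVec x)
        = ∑ i : Fin B, ∑ j : Fin B, ∑ e ∈ Finset.Icc 1 B,
            (r e * (if e ∈ path (i.val + 1) then x i else 0)) *
              (if e ∈ path (j.val + 1) then x j else 0) := by
      simp only [dotProduct, Matrix.mulVec, Finset.mul_sum]
      refine Finset.sum_congr rfl fun i _ => ?_
      refine Finset.sum_congr rfl fun j _ => ?_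
      rw [hM' i j, Finset.sum_mul, Finset.mul_sum]
      refine Finset.sum_congr rfl fun e _ => ?_
      by_cases hA : e ∈ path (i.val + 1) <;> by_cases hB : e ∈ path (j.val + 1) <;>
        simp [hA, hB] <;> ring
    rw [hstep]
    rw [Finset.sum_congr rfl fun i (_ : i ∈ Finset.univ) => Finset.sum_comm,
      Finset.sum_comm]
    refine Finset.sum_congr rfl fun e _ => ?_
    simp only [← Finset.mul_sum]
    rw [← Finset.sum_mul, ← Finset.mul_sum, sq]
    ring
  -- symmetry
  have hsymm : M.IsSymm := by
    ext i j
    rw [Matrix.transpose_apply, hM, hM, Finset.inter_comm]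
  have herm : M.IsHermitian := by
    ext i j
    rw [Matrix.conjTranspose_apply, hM, hM, Finset.inter_comm, star_trivial]
  refine ⟨hsymm, Matrix.PosSemidef.of_dotProduct_mulVec_nonneg herm fun x => ?_, fun hrpos => Matrix.PosDef.of_dotProduct_mulVec_pos herm fun x hx => ?_⟩
  · rw [star_trivial, hQ]
    exact Finset.sum_nonneg fun e he => mul_nonneg (hr e he) (sq_nonneg _)
  · rw [star_trivial, hQ]
    have hnn : (0:ℝ) ≤ ∑ e ∈ Finset.Icc 1 B,
        r e * (∑ i : Fin B, if e ∈ path (i.val + 1) then x i else 0) ^ 2 :=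
      Finset.sum_nonneg fun e he => mul_nonneg (hr e he) (sq_nonneg _)
    rcases eq_or_lt_of_le hnn with heq | hlt
    · exfalso
      have hterm : ∀ e ∈ Finset.Icc 1 B,
          r e * (∑ i : Fin B, if e ∈ path (i.val + 1) then x i else 0) ^ 2 = 0 :=
        (Finset.sum_eq_zero_iff_of_nonneg
          (fun e he => mul_nonneg (hr e he) (sq_nonneg _))).mp heq.symm
      have hzero : ∀ e ∈ Finset.Icc 1 B,
          (∑ i : Fin B, if e ∈ path (i.val + 1) then x i else 0) = 0 := by
        intro e he
        have := hterm e he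
        have hre := (hrpos e he).ne'
        have hsq : (∑ i : Fin B, if e ∈ path (i.val + 1) then x i else 0) ^ 2 = 0 := by
          rcases mul_eq_zero.mp this with h | h
          · exact absurd h hre
          · exact h
        exact pow_eq_zero_iff (by norm_num) |>.mp hsq
      have hself : ∀ j ∈ Finset.Icc 1 B, j ∈ path j := by
        intro j hj; rw [hpath j hj]; exact Finset.mem_insert_self _ _
      have key : ∀ m, ∀ i : Fin B, B - i.val ≤ m → x i = 0 := by
        intro m
        induction m with
        | zero => intro i hi; have := i.isLt; omega
        | succ m ih =>
          intro i _
          have hlater : ∀ i' : Fin B, i.val < i'.val → x i' = 0 := by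
            intro i' h; exact ih i' (by have := i'.isLt; omega)
          have he := hzero (i.val + 1) (hmemIcc i)
          have hsum : ∀ i' : Fin B,
              (if (i.val + 1) ∈ path (i'.val + 1) then x i' else 0)
                = if i' = i then x i else 0 := by
            intro i'
            by_cases hmem : (i.val + 1) ∈ path (i'.val + 1)
            · have hle := (Finset.mem_Icc.mp (hsub (i'.val + 1) i'.isLt hmem)).2
              by_cases hii : i' = i
              · subst hii; simp [hmem]
              · have hne : i.val ≠ i'.val := fun h => hii (Fin.ext h.symm)
                have hlt : i.val < i'.val := by omega
                rw [if_pos hmem, if_neg hii, hlater i' hlt]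
            · rw [if_neg hmem, if_neg]
              intro hii; subst hii; exact hmem (hself _ (hmemIcc i'))
          rw [Finset.sum_congr rfl (fun i' _ => hsum i')] at he
          simpa using he
      exact hx (funext fun i => key B i (by omega))
    · exact hlt
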